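/- arXiv:1404.3441 — 2 statements merged into one kernel-verified Lean document; each statement's English description precedes it below -/
import Mathlib

section
/- The Gnedin–Fisher weights $V_{n,k} = \frac{(\gamma)_{n-k}(1-\psi)_{k-1}(1-\gamma+\psi)_{k-1}}{(1+\psi)_{n-1}(1+\gamma-\psi)_{n-1}}$ satisfy the Gibbs backward recursion with $\alpha=-1$: $V_{n,k} = (n+k)V_{n+1,k} + V_{n+1,k+1}$ for all $1\le k\le n$. -/
/-- Rising factorial `(x)_y = x (x+1) ⋯ (x+y-1)`. -/
noncomputable def risingFac (x : ℝ) (y : ℕ) : ℝ :=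
  ∏ i ∈ Finset.range y, (x + i)

/-- The two-parameter Gnedin–Fisher Gibbs weights. -/
noncomputable def gfV (ψ γ : ℝ) (n k : ℕ) : ℝ :=
  risingFac γ (n - k) * risingFac (1 - ψ) (k - 1) * risingFac (1 - γ + ψ) (k - 1) /
    (risingFac (1 + ψ) (n - 1) * risingFac (1 + γ - ψ) (n - 1))

lemma risingFac_succ (x : ℝ) (m : ℕ) :
    risingFac x (m + 1) = risingFac x m * (x + m) := by
  simp [risingFac, Finset.prod_range_succ]

lemma risingFac_pos {x : ℝ} (hx : 0 < x) (m : ℕ) : 0 < risingFac x m := by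
  refine Finset.prod_pos fun i _ => ?_
  positivity

/-- the Gnedin–Fisher weights satisfy the Gibbs backward recursion
with `α = -1`, i.e. `V_{n,k} = (n + k) V_{n+1,k} + V_{n+1,k+1}`. -/
theorem gfV_backward_recursion
    (ψ γ : ℝ) (hψ : ψ ∈ Set.Ico (0 : ℝ) 1) (hγ : 0 < γ) (hγψ : γ < ψ + 1)
    (n k : ℕ) (hk : 1 ≤ k) (hkn : k ≤ n) :
    gfV ψ γ n k = ((n : ℝ) + k) * gfV ψ γ (n + 1) k + gfV ψ γ (n + 1) (k + 1) := by
  obtain ⟨hψ0, hψ1⟩ := hψ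
  obtain ⟨b, rfl⟩ : ∃ b, k = b + 1 := ⟨k - 1, (Nat.succ_pred_eq_of_pos hk).symm⟩
  obtain ⟨a, rfl⟩ : ∃ a, n = a + (b + 1) := ⟨n - (b + 1), (Nat.sub_add_cancel hkn).symm⟩
  have hD : (0 : ℝ) < risingFac (1 + ψ) (a + b) := risingFac_pos (by linarith) _
  have hE : (0 : ℝ) < risingFac (1 + γ - ψ) (a + b) := risingFac_pos (by linarith) _
  have h1 : (0 : ℝ) < 1 + ψ + (a + b) := by positivity
  have h2 : (0 : ℝ) < 1 + γ - ψ + (a + b) := by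
    have : (0:ℝ) ≤ (a + b : ℕ) := Nat.cast_nonneg _
    push_cast at this ⊢; linarith
  simp only [gfV, Nat.add_sub_cancel, Nat.succ_sub_one,
    show a + (b + 1) - (b + 1) = a from by omega,
    show a + (b + 1) + 1 - (b + 1) = a + 1 from by omega,
    show a + (b + 1) - 1 = a + b from by omega,
    show a + (b + 1) + 1 - 1 = a + b + 1 from by omega,
    show a + (b + 1) + 1 - (b + 1 + 1) = a from by omega,
    show b + 1 + 1 - 1 = b + 1 from by omega,
    risingFac_succ]
  push_cast
  field_simp
  ring
end

section
/- The limit defining the Poisson–Dirichlet posterior mean of Shannon entropy: for real constants $c_j = n_j - \alpha > 0$ ($j=1,\dots,k$) with $\sum_j c_j = n - k\alpha$ and $d = \theta + k\alpha$, the function $g(m) = \frac{1}{m-1}\left(1 - \frac{\sum_j \Gamma(c_j+m)/\Gamma(c_j) + \frac{\Gamma(m-\alpha)}{\Gamma(1-\alpha)} d}{\Gamma(\theta+n+m)/\Gamma(\theta+n)}\right)$ satisfies $\lim_{m\to1^+} g(m) = \psi_0(\theta+n+1) - \frac{1}{\theta+n}\left[d\,\psi_0(1-\alpha) + \sum_{j=1}^k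 c_j\,\psi_0(c_j+1)\right]$. -/
open Filter Topology

/-- The digamma function `ψ₀ = Γ'/Γ`. -/
noncomputable def digamma (x : ℝ) : ℝ := deriv Real.Gamma x / Real.Gamma x

lemma hasDerivAt_Gamma_shift (a : ℝ) (ha : 0 < a + 1) :
    HasDerivAt (fun m : ℝ => Real.Gamma (a + m)) (deriv Real.Gamma (a + 1)) 1 := by
  have hdiff : DifferentiableAt ℝ Real.Gamma (a + 1) :=
    Real.differentiableAt_Gamma fun m =>
      (lt_of_le_of_lt (neg_nonpos.mpr m.cast_nonneg) ha).ne'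
  have h1 : HasDerivAt (fun m : ℝ => a + m) 1 1 := (hasDerivAt_id 1).const_add a
  simpa [Function.comp_def] using (hdiff.hasDerivAt.comp 1 h1)

/-- the limit, as `m → 1⁺`, of the Poisson–Dirichlet posterior mean of the
Tsallis index, yielding the posterior mean of Shannon entropy. -/
theorem tsallis_posterior_mean_PD_limit
    (α θ : ℝ) (hα : α ∈ Set.Ioo (0 : ℝ) 1) (hθ : -α < θ)
    (k : ℕ) (hk : 1 ≤ k) (nvec : Fin k → ℕ) (hnvec : ∀ j, 1 ≤ nvec j)
    (n : ℕ) (hn : n = ∑ j, nvec j)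
    (c : Fin k → ℝ) (hc : ∀ j, c j = (nvec j : ℝ) - α)
    (d : ℝ) (hd : d = θ + k * α) :
    Tendsto
      (fun m : ℝ =>
        (1 - ((∑ j, Real.Gamma (c j + m) / Real.Gamma (c j))
              + Real.Gamma (m - α) / Real.Gamma (1 - α) * d) /
            (Real.Gamma (θ + n + m) / Real.Gamma (θ + n))) / (m - 1))
      (nhdsWithin 1 (Set.Ioi 1))
      (nhds (digamma (θ + n + 1)
        - (θ + n)⁻¹ * (d * digamma (1 - α) + ∑ j, c j * digamma (c j + 1)))) := by
  obtain ⟨hα0, hα1⟩ := hα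
  have h1α : (0:ℝ) < 1 - α := by linarith
  have hn1 : (1:ℝ) ≤ (n:ℝ) := by
    have : 1 ≤ n := by
      rw [hn]
      calc 1 ≤ k := hk
      _ = ∑ _j : Fin k, 1 := by simp
      _ ≤ ∑ j, nvec j := Finset.sum_le_sum fun j _ => hnvec j
    exact_mod_cast this
  have hθn : (0:ℝ) < θ + n := by linarith
  have hθnne : (θ + (n:ℝ)) ≠ 0 := hθn.ne'
  have hΓθn : (0:ℝ) < Real.Gamma (θ + n) := Real.Gamma_pos_of_pos hθn
  have hcpos : ∀ j, 0 < c j := fun j => by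
    rw [hc]
    have : (1:ℝ) ≤ (nvec j : ℝ) := by exact_mod_cast hnvec j
    linarith
  have hΓc : ∀ j, (0:ℝ) < Real.Gamma (c j) := fun j => Real.Gamma_pos_of_pos (hcpos j)
  -- numerator and denominator
  set N : ℝ → ℝ := fun m => (∑ j, Real.Gamma (c j + m) / Real.Gamma (c j))
      + Real.Gamma (m - α) / Real.Gamma (1 - α) * d with hNdef
  set D : ℝ → ℝ := fun m => Real.Gamma (θ + n + m) / Real.Gamma (θ + n) with hDdef
  set N' : ℝ := (∑ j, deriv Real.Gamma (c j + 1) / Real.Gamma (c j))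
      + deriv Real.Gamma (1 - α) / Real.Gamma (1 - α) * d with hN'def
  set D' : ℝ := deriv Real.Gamma (θ + n + 1) / Real.Gamma (θ + n) with hD'def
  have hDN : HasDerivAt N N' 1 := by
    apply HasDerivAt.add
    · exact HasDerivAt.fun_sum fun j _ =>
        (hasDerivAt_Gamma_shift (c j) (by linarith [hcpos j])).div_const _
    · have h0 : HasDerivAt (fun m : ℝ => Real.Gamma (m - α))
          (deriv Real.Gamma (1 - α)) 1 := by
        have := hasDerivAt_Gamma_shift (-α) (by linarith)
        simpa [neg_add_eq_sub] using this
      exact (h0.div_const _).mul_const d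
  have hDD : HasDerivAt D D' 1 :=
    (hasDerivAt_Gamma_shift (θ + n) (by linarith)).div_const _
  -- values at 1
  have hΓcj : ∀ j, Real.Gamma (c j + 1) = c j * Real.Gamma (c j) := fun j =>
    Real.Gamma_add_one (hcpos j).ne'
  have hΓθn1 : Real.Gamma (θ + n + 1) = (θ + n) * Real.Gamma (θ + n) :=
    Real.Gamma_add_one hθnne
  have hsumc : ∑ j, c j = (n:ℝ) - k * α := by
    have : ∑ j, c j = (∑ j, (nvec j : ℝ)) - k * α := by
      simp [hc, Finset.sum_sub_distrib, mul_comm]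
    rw [this, hn]; push_cast; ring
  have hN1 : N 1 = θ + n := by
    have h1 : ∀ j, Real.Gamma (c j + 1) / Real.Gamma (c j) = c j := fun j => by
      rw [hΓcj j, mul_div_assoc, div_self (hΓc j).ne', mul_one]
    simp only [hNdef]
    rw [Finset.sum_congr rfl fun j _ => h1 j]
    rw [show (1:ℝ) - α = 1 - α from rfl, div_self (Real.Gamma_pos_of_pos h1α).ne',
      one_mul, hsumc, hd]
    ring
  have hD1 : D 1 = θ + n := by
    simp only [hDdef]
    rw [hΓθn1, mul_div_assoc, div_self hΓθn.ne', mul_one]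
  have hD1ne : D 1 ≠ 0 := by rw [hD1]; exact hθnne
  -- the function h and its derivative
  set L : ℝ := 0 - (N' * D 1 - N 1 * D') / D 1 ^ 2 with hLdef
  have hh : HasDerivAt (fun m => 1 - N m / D m) L 1 :=
    (hasDerivAt_const 1 (1:ℝ)).sub (hDN.div hDD hD1ne)
  have hh1 : (1:ℝ) - N 1 / D 1 = 0 := by
    rw [hN1, hD1, div_self hθnne]; ring
  have hslope : Tendsto (slope (fun m => 1 - N m / D m) 1)
      (nhdsWithin 1 {(1:ℝ)}ᶜ) (nhds L) := hasDerivAt_iff_tendsto_slope.mp hh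
  have hmono : Tendsto (slope (fun m => 1 - N m / D m) 1)
      (nhdsWithin 1 (Set.Ioi 1)) (nhds L) :=
    hslope.mono_left (nhdsWithin_mono 1 fun x hx => ne_of_gt hx)
  have heq : ∀ m : ℝ, slope (fun m => 1 - N m / D m) 1 m
      = (1 - N m / D m) / (m - 1) := fun m => by
    rw [slope_def_field, hh1, sub_zero]
  have key : Tendsto (fun m : ℝ => (1 - N m / D m) / (m - 1))
      (nhdsWithin 1 (Set.Ioi 1)) (nhds L) := by
    refine hmono.congr fun m => heq m
  -- identify L with the target
  have hLval : L = digamma (θ + n + 1)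
      - (θ + n)⁻¹ * (d * digamma (1 - α) + ∑ j, c j * digamma (c j + 1)) := by
    have hsum2 : ∑ j, c j * digamma (c j + 1)
        = ∑ j, deriv Real.Gamma (c j + 1) / Real.Gamma (c j) := by
      refine Finset.sum_congr rfl fun j _ => ?_
      rw [digamma, hΓcj j]
      field_simp [(hcpos j).ne', (hΓc j).ne']
    rw [hLdef, hN1, hD1, hN'def, hD'def, digamma, digamma, hΓθn1, hsum2]
    field_simp
    ring
  rw [hLval] at key
  exact key
end
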